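/- arXiv:0909.3607 — 4 statements merged into one kernel-verified Lean document; each statement's English description precedes it below -/
import Mathlib

section
/- Let 𝒢 be a compact operator on a Banach space Y and {P_n} a sequence of bounded projections converging pointwise to the identity on Y. Then the family {P_n 𝒢 : n ≥ 1} is collectively compact, i.e. the set {P_n 𝒢 v : ‖v‖ ≤ 1, n ≥ 1} has compact closure in Y. -/
/-- If `𝒢` is compact on a Banach space `Y` and `P_n` are bounded projections
converging pointwise to the identity, then `{P_n 𝒢}` is collectively compact: the set
`{P_n 𝒢 v : ‖v‖ ≤ 1, n ≥ 1}` has compact closure in `Y`. -/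
theorem collectively_compact_family
    {Y : Type*} [NormedAddCommGroup Y] [NormedSpace ℝ Y] [CompleteSpace Y]
    (G : Y →L[ℝ] Y) (hG : IsCompactOperator G)
    (P : ℕ → Y →L[ℝ] Y)
    (hproj : ∀ n, (P n).comp (P n) = P n)
    (hptwise : ∀ y : Y, Filter.Tendsto (fun n => P n y) Filter.atTop (nhds y)) :
    IsCompact (closure {y : Y | ∃ (n : ℕ) (v : Y), 1 ≤ n ∧ ‖v‖ ≤ 1 ∧ y = P n (G v)}) := by
  -- uniform bound on the P n
  obtain ⟨C, hC⟩ : ∃ C', ∀ n, ‖P n‖ ≤ C' := by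
    apply banach_steinhaus (𝕜 := ℝ) (𝕜₂ := ℝ)
    intro x
    obtain ⟨C, hC⟩ := ((hptwise x).norm.bddAbove_range).imp fun C hC => hC
    exact ⟨C, fun i => hC (Set.mem_range_self i)⟩
  have hC0 : (0:ℝ) ≤ C := le_trans (norm_nonneg _) (hC 0)
  -- the compact set K
  set K : Set Y := closure (G '' Metric.closedBall 0 1) with hKdef
  have hG' : IsCompactOperator (G : Y →ₗ[ℝ] Y) := hG
  have hK : IsCompact K := hG'.isCompact_closure_image_closedBall 1
  -- the big union T
  set T : Set Y := ⋃ n : ℕ, (P n) '' K with hTdef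
  have hTB : TotallyBounded T := by
    rw [Metric.totallyBounded_iff]
    intro ε hε
    have hδpos : 0 < ε / (3 * (C + 1)) := by positivity
    -- δ-net of K
    obtain ⟨t, htf, htsub⟩ := Metric.totallyBounded_iff.mp hK.totallyBounded
      (ε / (3 * (C + 1))) hδpos
    -- for each net point pick N
    have hch : ∀ y : Y, ∃ N : ℕ, ∀ n ≥ N, dist (P n y) y < ε / 3 := fun y =>
      Metric.tendsto_atTop.mp (hptwise y) (ε / 3) (by positivity)
    choose Nf hNf using hch
    set N : ℕ := htf.toFinset.sup Nf with hNdef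
    -- for n ≥ N, P n k is ε-close to a net point of K
    have key : ∀ n ≥ N, ∀ k ∈ K, ∃ y ∈ t, dist (P n k) y < ε := by
      intro n hn k hk
      obtain ⟨y, hy, hky⟩ := by
        have := htsub hk
        simpa using this
      refine ⟨y, hy, ?_⟩
      have h1 : dist (P n k) (P n y) ≤ C * (ε / (3 * (C + 1))) := by
        rw [dist_eq_norm, ← map_sub]
        calc ‖P n (k - y)‖ ≤ ‖P n‖ * ‖k - y‖ := (P n).le_opNorm _
          _ ≤ C * (ε / (3 * (C + 1))) := by
              apply mul_le_mul (hC n) _ (norm_nonneg _) hC0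
              rw [← dist_eq_norm]; exact hky.le
      have h2 : dist (P n y) y < ε / 3 := hNf y n (le_trans (Finset.le_sup (htf.mem_toFinset.mpr hy)) hn)
      have h3 : dist y (P n k) ≤ dist (P n k) (P n y) + dist (P n y) y := by
        rw [dist_comm]; exact dist_triangle _ _ _
      have hCd : C * (ε / (3 * (C + 1))) ≤ ε / 3 := by
        calc C * (ε / (3 * (C + 1))) ≤ (C + 1) * (ε / (3 * (C + 1))) :=
              mul_le_mul_of_nonneg_right (by linarith) hδpos.le
          _ = ε / 3 := by field_simp
      rw [dist_comm]
      calc dist y (P n k) ≤ C * (ε / (3 * (C + 1))) + ε / 3 := by linarith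
        _ < ε := by linarith
    -- nets for the finitely many P m '' K, m < N
    have hnets : ∀ m : ℕ, ∃ s : Set Y, s.Finite ∧ (P m) '' K ⊆ ⋃ y ∈ s, Metric.ball y ε :=
      fun m => Metric.totallyBounded_iff.mp (hK.image (P m).continuous).totallyBounded ε hε
    choose s hsf hssub using hnets
    refine ⟨t ∪ ⋃ m ∈ Finset.range N, s m, htf.union (Set.Finite.biUnion (Finset.range N).finite_toSet fun m _ => hsf m), ?_⟩
    rintro x hx
    simp only [hTdef, Set.mem_iUnion] at hx
    obtain ⟨n, k, hk, rfl⟩ := hx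
    rcases lt_or_ge n N with hnN | hnN
    · have := hssub n ⟨k, hk, rfl⟩
      simp only [Set.mem_iUnion] at this ⊢
      obtain ⟨y, hy, hby⟩ := this
      exact ⟨y, Or.inr (Set.mem_biUnion (Finset.mem_coe.mpr (Finset.mem_range.mpr hnN)) hy), hby⟩
    · obtain ⟨y, hy, hby⟩ := key n hnN k hk
      simp only [Set.mem_iUnion]
      exact ⟨y, Or.inl hy, by simpa [Metric.mem_ball] using hby⟩
  -- conclude
  have hTc : IsCompact (closure T) :=
    TotallyBounded.isCompact_of_isClosed hTB.closure isClosed_closure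
  apply hTc.of_isClosed_subset isClosed_closure
  apply closure_mono
  rintro y ⟨n, v, _, hv, rfl⟩
  exact Set.mem_iUnion.mpr ⟨n, ⟨G v, subset_closure ⟨v, by simpa using hv, rfl⟩, rfl⟩⟩
end

section
/- For each n, the ridge polynomials φ̃_{n,k}(x,y) = (1/√π) U_n(x cos(kh) + y sin(kh)), k = 0,…,n, with h = π/(n+1) and U_n the degree-n Chebyshev polynomial of the second kind, form an orthonormal set in L²(D), where D is the unit disk: ∫_D φ̃_{n,j} φ̃_{n,k} dx dy = δ_{jk}. -/
open MeasureTheory Real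

section aux
open Polynomial.Chebyshev

lemma U_eval_one (n : ℕ) : (U ℝ (n:ℤ)).eval 1 = n + 1 := by
  induction n using Nat.twoStepInduction with
  | zero => simp [U_zero]
  | one => simp [U_one]; norm_num
  | more m ih1 ih2 =>
    have h : ((m:ℤ)+2 : ℤ) = ((m+2 : ℕ) : ℤ) := by push_cast; ring
    rw [← h, U_add_two]
    have h1 : ((m:ℤ)+1 : ℤ) = ((m+1 : ℕ) : ℤ) := by push_cast; ring
    rw [h1] at *
    simp only [Polynomial.eval_sub, Polynomial.eval_mul, Polynomial.eval_ofNat,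
      Polynomial.eval_X, ih1, ih2]
    push_cast
    ring

lemma hasDerivAt_U_comp (n : ℕ) (c m : ℝ) (s : ℝ) :
    HasDerivAt (fun s : ℝ => (T ℝ ((n:ℤ)+1)).eval (c + s * m))
      (((n:ℝ)+1) * (U ℝ (n:ℤ)).eval (c + s * m) * m) s := by
  have h1 : HasDerivAt (fun s : ℝ => c + s * m) m s := by
    simpa using ((hasDerivAt_id s).mul_const m).const_add c
  have h2 := (Polynomial.hasDerivAt (T ℝ ((n:ℤ)+1)) (c + s * m)).comp s h1
  have h3 : (Polynomial.derivative (T ℝ ((n:ℤ)+1))).eval (c + s * m)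
      = ((n:ℝ)+1) * (U ℝ (n:ℤ)).eval (c + s * m) := by
    rw [T_derivative_eq_U]; simp
  simpa [h3, Function.comp_def, mul_assoc] using h2

lemma chord_nondeg (n : ℕ) (a δ : ℝ) (ha : 0 ≤ Real.sin a) (hδ : Real.sin δ ≠ 0) :
    ∫ s in Set.Ioo (-Real.sin a) (Real.sin a),
        (U ℝ (n:ℤ)).eval (Real.cos a * Real.cos δ + s * Real.sin δ)
      = 2 * Real.sin (((n:ℝ)+1)*a) / ((n:ℝ)+1) * (U ℝ (n:ℤ)).eval (Real.cos δ) := by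
  have hcont : Continuous (fun s : ℝ => (U ℝ (n:ℤ)).eval (Real.cos a * Real.cos δ + s * Real.sin δ)) := by
    exact (U ℝ (n:ℤ)).continuous.comp (by continuity)
  have hn1 : ((n:ℝ)+1) ≠ 0 := by positivity
  -- antiderivative
  set c := Real.cos a * Real.cos δ
  set m := Real.sin δ
  have key : ∀ s : ℝ, HasDerivAt
      (fun s : ℝ => (T ℝ ((n:ℤ)+1)).eval (c + s * m) / (((n:ℝ)+1) * m))
      ((U ℝ (n:ℤ)).eval (c + s * m)) s := by
    intro s
    have := (hasDerivAt_U_comp n c m s).div_const (((n:ℝ)+1) * m)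
    refine this.congr_deriv ?_
    field_simp
  rw [← MeasureTheory.integral_Ioc_eq_integral_Ioo,
    ← intervalIntegral.integral_of_le (by linarith : -Real.sin a ≤ Real.sin a)]
  rw [intervalIntegral.integral_eq_sub_of_hasDerivAt (fun s _ => key s)
    (hcont.intervalIntegrable _ _)]
  have e1 : c + Real.sin a * m = Real.cos (a - δ) := by
    rw [Real.cos_sub]
  have e2 : c + (-Real.sin a) * m = Real.cos (a + δ) := by
    rw [Real.cos_add]; ring
  rw [e1, e2, T_real_cos, T_real_cos]
  push_cast
  have hU : (U ℝ (n:ℤ)).eval (Real.cos δ) * m = Real.sin (((n:ℝ)+1) * δ) := by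
    exact_mod_cast U_real_cos δ n
  have e3 : Real.cos (((n:ℝ)+1) * (a - δ)) - Real.cos (((n:ℝ)+1) * (a + δ))
      = 2 * Real.sin (((n:ℝ)+1)*a) * Real.sin (((n:ℝ)+1)*δ) := by
    rw [mul_sub, mul_add, Real.cos_sub, Real.cos_add]
    ring
  rw [div_sub_div_same, e3, ← hU]
  field_simp

lemma chord_deg (n : ℕ) (a δ : ℝ) (ha : 0 ≤ Real.sin a) (hδ : Real.cos δ = 1) :
    ∫ s in Set.Ioo (-Real.sin a) (Real.sin a),
        (U ℝ (n:ℤ)).eval (Real.cos a * Real.cos δ + s * Real.sin δ)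
      = 2 * Real.sin (((n:ℝ)+1)*a) / ((n:ℝ)+1) * (U ℝ (n:ℤ)).eval (Real.cos δ) := by
  have hs : Real.sin δ = 0 := by
    have := Real.sin_sq_add_cos_sq δ
    nlinarith [sq_nonneg (Real.sin δ)]
  rw [hδ, hs]
  simp only [mul_one, mul_zero, add_zero]
  rw [MeasureTheory.setIntegral_const, MeasureTheory.measureReal_def, Real.volume_Ioo]
  have hU : (U ℝ (n:ℤ)).eval (Real.cos a) * Real.sin a = Real.sin (((n:ℝ)+1) * a) := by
    exact_mod_cast U_real_cos a n
  rw [_root_.U_eval_one]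
  have hn1 : ((n:ℝ)+1) ≠ 0 := by positivity
  rw [ENNReal.toReal_ofReal (by linarith)]
  rw [smul_eq_mul]
  field_simp
  nlinarith [hU]

lemma chord (n : ℕ) (a δ : ℝ) (ha : 0 ≤ Real.sin a) (hδ : Real.sin δ ≠ 0 ∨ Real.cos δ = 1) :
    ∫ s in Set.Ioo (-Real.sin a) (Real.sin a),
        (U ℝ (n:ℤ)).eval (Real.cos a * Real.cos δ + s * Real.sin δ)
      = 2 * Real.sin (((n:ℝ)+1)*a) / ((n:ℝ)+1) * (U ℝ (n:ℤ)).eval (Real.cos δ) := by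
  rcases hδ with hs | hc
  · exact chord_nondeg n a δ ha hs
  · exact chord_deg n a δ ha hc

lemma sin_sq_int (m : ℝ) (hm : m ≠ 0) (hsin : Real.sin (2 * m * π) = 0) :
    ∫ x in (0:ℝ)..π, Real.sin (m * x) ^ 2 = π / 2 := by
  have key : ∀ x : ℝ, HasDerivAt (fun x : ℝ => x / 2 - Real.sin (2 * m * x) / (4 * m))
      (Real.sin (m * x) ^ 2) x := by
    intro x
    have h1 : HasDerivAt (fun x : ℝ => x / 2) (1/2) x := (hasDerivAt_id x).div_const 2
    have h2 : HasDerivAt (fun x : ℝ => Real.sin (2 * m * x)) (Real.cos (2 * m * x) * (2 * m)) x := by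
      have hid : HasDerivAt (fun x : ℝ => 2 * m * x) (2 * m) x := by
        simpa using (hasDerivAt_id x).const_mul (2 * m)
      simpa [Function.comp_def] using (Real.hasDerivAt_sin (2 * m * x)).comp x hid
    have := h1.sub (h2.div_const (4 * m))
    refine this.congr_deriv ?_
    have hc : Real.cos (2 * m * x) = 1 - 2 * Real.sin (m * x) ^ 2 := by
      rw [mul_assoc, Real.cos_two_mul']
      have := Real.sin_sq_add_cos_sq (m * x)
      linarith
    rw [hc]
    field_simp
    ring
  rw [intervalIntegral.integral_eq_sub_of_hasDerivAt (fun x _ => key x)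
    (((Real.continuous_sin.comp (continuous_const.mul continuous_id)).pow 2).intervalIntegrable _ _)]
  rw [hsin]
  simp

lemma U_sq_int (n : ℕ) :
    ∫ t in Set.Ioo (-1:ℝ) 1, (U ℝ (n:ℤ)).eval t ^ 2 * Real.sqrt (1 - t ^ 2) = π / 2 := by
  have hg : Continuous (fun t : ℝ => (U ℝ (n:ℤ)).eval t ^ 2 * Real.sqrt (1 - t ^ 2)) := by
    apply Continuous.mul
    · exact ((U ℝ (n:ℤ)).continuous).pow 2
    · exact Real.continuous_sqrt.comp (by continuity)
  have hsub := intervalIntegral.integral_comp_smul_deriv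
    (f := Real.cos) (f' := fun x => -Real.sin x)
    (g := fun t => (U ℝ (n:ℤ)).eval t ^ 2 * Real.sqrt (1 - t ^ 2))
    (a := (0:ℝ)) (b := π)
    (fun x _ => by simpa using (Real.hasDerivAt_cos x))
    ((Real.continuous_sin.neg).continuousOn) hg
  rw [Real.cos_zero, Real.cos_pi] at hsub
  -- hsub : ∫ x in 0..π, (-sin x) • g (cos x) = ∫ t in 1..(-1), g t
  rw [← MeasureTheory.integral_Ioc_eq_integral_Ioo,
    ← intervalIntegral.integral_of_le (by norm_num : (-1:ℝ) ≤ 1)]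
  have h2 : (∫ x in (-1:ℝ)..1, (U ℝ (n:ℤ)).eval x ^ 2 * Real.sqrt (1 - x ^ 2))
      = - ∫ x in (1:ℝ)..(-1), (U ℝ (n:ℤ)).eval x ^ 2 * Real.sqrt (1 - x ^ 2) := by
    rw [intervalIntegral.integral_symm]
  rw [h2, ← hsub, ← intervalIntegral.integral_neg]
  have heq : Set.EqOn
      (fun x => -((fun x => -Real.sin x) x •
        (((fun t => (U ℝ (n:ℤ)).eval t ^ 2 * Real.sqrt (1 - t ^ 2)) ∘ Real.cos) x)))
      (fun x => Real.sin (((n:ℝ)+1) * x) ^ 2) (Set.uIcc (0:ℝ) π) := by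
    intro x hx
    rw [Set.uIcc_of_le Real.pi_pos.le] at hx
    have hs : 0 ≤ Real.sin x := Real.sin_nonneg_of_mem_Icc hx
    have h1 : (1:ℝ) - Real.cos x ^ 2 = Real.sin x ^ 2 := by
      have := Real.sin_sq_add_cos_sq x; linarith
    have hU : (U ℝ (n:ℤ)).eval (Real.cos x) * Real.sin x = Real.sin (((n:ℝ)+1) * x) := by
      exact_mod_cast U_real_cos x n
    simp only [Function.comp_apply, smul_eq_mul]
    rw [h1, Real.sqrt_sq hs, ← hU]
    ring
  rw [intervalIntegral.integral_congr heq]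
  exact sin_sq_int ((n:ℝ)+1) (by positivity)
    (by
      have : (2 * ((n:ℝ)+1) * π) = ((2*n+2 : ℕ) : ℝ) * π := by push_cast; ring
      rw [this, Real.sin_nat_mul_pi])

lemma inner_int (n : ℕ) (δ x : ℝ) (hδ : Real.sin δ ≠ 0 ∨ Real.cos δ = 1) :
    ∫ y in Set.Ioo (-Real.sqrt (1 - x ^ 2)) (Real.sqrt (1 - x ^ 2)),
        (U ℝ (n:ℤ)).eval (x * Real.cos δ + y * Real.sin δ)
      = 2 / ((n:ℝ)+1) * Real.sqrt (1 - x ^ 2) * (U ℝ (n:ℤ)).eval x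
          * (U ℝ (n:ℤ)).eval (Real.cos δ) := by
  by_cases hx : |x| ≤ 1
  · rw [abs_le] at hx
    have hca : Real.cos (Real.arccos x) = x := Real.cos_arccos hx.1 hx.2
    have hsa : Real.sin (Real.arccos x) = Real.sqrt (1 - x ^ 2) := Real.sin_arccos x
    have h := chord n (Real.arccos x) δ (by rw [hsa]; positivity) hδ
    rw [hca, hsa] at h
    rw [h]
    have hU : (U ℝ (n:ℤ)).eval x * Real.sqrt (1 - x ^ 2)
        = Real.sin (((n:ℝ)+1) * Real.arccos x) := by
      have := U_real_cos (Real.arccos x) (n:ℤ)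
      rw [hca, hsa] at this
      exact_mod_cast this
    rw [← hU]
    ring
  · push_neg at hx
    have h0 : Real.sqrt (1 - x ^ 2) = 0 := by
      apply Real.sqrt_eq_zero_of_nonpos
      nlinarith [abs_nonneg x, sq_abs x]
    rw [h0]
    simp

lemma disk_int (n : ℕ) (δ : ℝ) (hδ : Real.sin δ ≠ 0 ∨ Real.cos δ = 1) :
    ∫ q in {q : ℝ × ℝ | q.1 ^ 2 + q.2 ^ 2 < 1},
        (U ℝ (n:ℤ)).eval q.1 * (U ℝ (n:ℤ)).eval (q.1 * Real.cos δ + q.2 * Real.sin δ)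
      = π / ((n:ℝ)+1) * (U ℝ (n:ℤ)).eval (Real.cos δ) := by
  set S : Set (ℝ × ℝ) := {q : ℝ × ℝ | q.1 ^ 2 + q.2 ^ 2 < 1} with hSdef
  set H : ℝ × ℝ → ℝ := fun q =>
    (U ℝ (n:ℤ)).eval q.1 * (U ℝ (n:ℤ)).eval (q.1 * Real.cos δ + q.2 * Real.sin δ) with hHdef
  have hScont : Continuous (fun q : ℝ × ℝ => q.1 ^ 2 + q.2 ^ 2) := by continuity
  have hSopen : IsOpen S := isOpen_lt hScont continuous_const
  have hS : MeasurableSet S := hSopen.measurableSet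
  have hH : Continuous H := by
    apply Continuous.mul
    · exact (U ℝ (n:ℤ)).continuous.comp continuous_fst
    · exact (U ℝ (n:ℤ)).continuous.comp (by continuity)
  have hsub : S ⊆ Metric.closedBall 0 1 := by
    intro q hq
    simp only [hSdef, Set.mem_setOf_eq] at hq
    rw [Metric.mem_closedBall, dist_zero_right]
    rw [Prod.norm_def]
    simp only [Real.norm_eq_abs]
    apply max_le <;> rw [abs_le] <;> constructor <;> nlinarith [sq_nonneg q.1, sq_nonneg q.2]
  have hInt : IntegrableOn H S := by
    exact (hH.continuousOn.integrableOn_compact (isCompact_closedBall _ _)).mono_set hsub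
  rw [← MeasureTheory.integral_indicator hS]
  rw [MeasureTheory.Measure.volume_eq_prod]
  rw [MeasureTheory.integral_prod _
    ((hInt.integrable_indicator hS).congr (by rfl) |>.mono_measure le_rfl |>.congr (by rfl) |>
      fun h => h)]
  have hsec : ∀ x : ℝ, ∀ y : ℝ, S.indicator H (x, y)
      = (Set.Ioo (-Real.sqrt (1 - x ^ 2)) (Real.sqrt (1 - x ^ 2))).indicator
          (fun y => H (x, y)) y := by
    intro x y
    have hmem : (x, y) ∈ S ↔ y ∈ Set.Ioo (-Real.sqrt (1 - x ^ 2)) (Real.sqrt (1 - x ^ 2)) := by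
      simp only [hSdef, Set.mem_setOf_eq, Set.mem_Ioo, ← abs_lt]
      rw [Real.lt_sqrt (abs_nonneg y), sq_abs]
      constructor <;> intro hh <;> [linarith; linarith]
    by_cases hmem2 : (x, y) ∈ S
    · rw [Set.indicator_of_mem hmem2, Set.indicator_of_mem (hmem.mp hmem2)]
    · rw [Set.indicator_of_notMem hmem2, Set.indicator_of_notMem (fun hc => hmem2 (hmem.mpr hc))]
  have hinner : ∀ x : ℝ, (∫ y, S.indicator H (x, y))
      = (2 / ((n:ℝ)+1) * (U ℝ (n:ℤ)).eval (Real.cos δ))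
          * ((U ℝ (n:ℤ)).eval x ^ 2 * Real.sqrt (1 - x ^ 2)) := by
    intro x
    simp_rw [hsec x]
    rw [MeasureTheory.integral_indicator measurableSet_Ioo]
    simp only [hHdef]
    rw [MeasureTheory.integral_const_mul, inner_int n δ x hδ]
    ring
  rw [← hHdef]
  simp_rw [hinner]
  rw [MeasureTheory.integral_const_mul]
  rw [← MeasureTheory.setIntegral_eq_integral_of_forall_compl_eq_zero
    (s := Set.Ioo (-1:ℝ) 1) (fun x hx => ?_), U_sq_int n]
  · field_simp
  · have hx1 : (1:ℝ) - x ^ 2 ≤ 0 := by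
      simp only [Set.mem_Ioo, not_and_or, not_lt] at hx
      rcases hx with hx | hx <;> nlinarith
    rw [Real.sqrt_eq_zero_of_nonpos hx1]
    ring

lemma rot_coord (α θ : ℝ) (w : ℂ) :
    (Complex.exp (α * Complex.I) * w).re * Real.cos θ
      + (Complex.exp (α * Complex.I) * w).im * Real.sin θ
    = w.re * Real.cos (θ - α) + w.im * Real.sin (θ - α) := by
  simp [Complex.exp_mul_I, Complex.mul_re, Complex.mul_im, Complex.add_re, Complex.add_im,
    Real.cos_sub, Real.sin_sub, Complex.cos_ofReal_re, Complex.sin_ofReal_re]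
  ring


/-- The ridge polynomial `φ̃_{n,k}(x,y) = (1/√π) U_n(x cos(kh) + y sin(kh))`, `h = π/(n+1)`,
with `U_n` the Chebyshev polynomial of the second kind. -/
noncomputable def ridgePoly (n k : ℕ) (p : EuclideanSpace ℝ (Fin 2)) : ℝ :=
  (1 / Real.sqrt π) *
    (Polynomial.Chebyshev.U ℝ (n : ℤ)).eval
      (p 0 * Real.cos (k * (π / (n + 1))) + p 1 * Real.sin (k * (π / (n + 1))))

/-- For each `n`, the ridge polynomials `φ̃_{n,k}`, `k = 0,…,n`, form an
orthonormal set in `L²(D)`, `D` the unit disk: `∫_D φ̃_{n,j} φ̃_{n,k} = δ_{jk}`. -/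
theorem ridge_polynomials_orthonormal (n : ℕ) (j k : ℕ) (hj : j ≤ n) (hk : k ≤ n) :
    ∫ p in Metric.ball (0 : EuclideanSpace ℝ (Fin 2)) 1,
      ridgePoly n j p * ridgePoly n k p = if j = k then 1 else 0 := by
  set h : ℝ := π / (n + 1) with hh
  set α : ℝ := j * h with hα
  set β : ℝ := k * h with hβ
  set δ : ℝ := β - α with hδdef
  have hn1 : ((n:ℝ)+1) ≠ 0 := by positivity
  -- the δ hypothesis
  have hsδ' : j ≠ k → Real.sin δ ≠ 0 := by
      intro hjk hc
      rw [Real.sin_eq_zero_iff] at hc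
      obtain ⟨m, hm⟩ := hc
      have hδval : δ = ((k:ℝ) - j) * (π / (n+1)) := by rw [hδdef, hα, hβ, hh]; ring
      have hπ : (0:ℝ) < π := Real.pi_pos
      have hmeq : (m:ℝ) * ((n:ℝ)+1) = (k:ℝ) - j := by
        have := hm
        rw [hδval] at this
        field_simp at this
        nlinarith [this]
      have habs : |(k:ℝ) - j| ≤ n := by
        rw [abs_le]
        constructor
        · have : (k:ℝ) ≥ 0 := Nat.cast_nonneg k
          have : (j:ℝ) ≤ n := by exact_mod_cast hj
          linarith [Nat.cast_nonneg (α := ℝ) k]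
        · have : (k:ℝ) ≤ n := by exact_mod_cast hk
          linarith [Nat.cast_nonneg (α := ℝ) j]
      have hm0 : m ≠ 0 := by
        intro h0
        rw [h0] at hmeq
        simp at hmeq
        have : (j:ℝ) = k := by linarith
        exact hjk (by exact_mod_cast this)
      have : (1:ℝ) ≤ |(m:ℝ)| := by
        have := Int.one_le_abs hm0
        exact_mod_cast this
      have : ((n:ℝ)+1) ≤ |(k:ℝ) - j| := by
        calc ((n:ℝ)+1) = 1 * ((n:ℝ)+1) := by ring
        _ ≤ |(m:ℝ)| * ((n:ℝ)+1) := by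
            apply mul_le_mul_of_nonneg_right this (by positivity)
        _ = |(m:ℝ) * ((n:ℝ)+1)| := by
            rw [abs_mul, abs_of_pos (by positivity : (0:ℝ) < (n:ℝ)+1)]
        _ = |(k:ℝ) - j| := by rw [hmeq]
      linarith
  have hδ : Real.sin δ ≠ 0 ∨ Real.cos δ = 1 := by
    by_cases hjk : j = k
    · right
      simp [hδdef, hα, hβ, hjk]
    · exact Or.inl (hsδ' hjk)
  -- transfer to ℂ
  set e : ℂ ≃ₗᵢ[ℝ] EuclideanSpace ℝ (Fin 2) := Complex.orthonormalBasisOneI.repr with he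
  set rot : ℂ ≃ₗᵢ[ℝ] ℂ := rotation (Circle.exp α) with hrot
  have hball1 : ⇑e ⁻¹' (Metric.ball 0 1) = Metric.ball 0 1 := by
    ext z
    simp [Metric.mem_ball, dist_zero_right, e.norm_map]
  have hball2 : ⇑rot ⁻¹' (Metric.ball 0 1) = Metric.ball 0 1 := by
    ext z
    simp [Metric.mem_ball, dist_zero_right, rot.norm_map]
  have step1 := (e.measurePreserving).setIntegral_preimage_emb
    (e.toHomeomorph.measurableEmbedding)
    (fun p => ridgePoly n j p * ridgePoly n k p) (Metric.ball 0 1)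
  rw [hball1] at step1
  rw [← step1]
  have step2 := (rot.measurePreserving).setIntegral_preimage_emb
    (rot.toHomeomorph.measurableEmbedding)
    (fun z => ridgePoly n j (e z) * ridgePoly n k (e z)) (Metric.ball 0 1)
  rw [hball2] at step2
  rw [← step2]
  -- pointwise simplification
  have hpt : ∀ z : ℂ, ridgePoly n j (e (rot z)) * ridgePoly n k (e (rot z))
      = (1/π) * ((U ℝ (n:ℤ)).eval z.re
          * (U ℝ (n:ℤ)).eval (z.re * Real.cos δ + z.im * Real.sin δ)) := by
    intro z
    have h0 : ∀ w : ℂ, (e w) 0 = w.re := fun w => by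
      rw [he, Complex.orthonormalBasisOneI_repr_apply]; rfl
    have h1 : ∀ w : ℂ, (e w) 1 = w.im := fun w => by
      rw [he, Complex.orthonormalBasisOneI_repr_apply]; rfl
    have hr : (rot z : ℂ) = Complex.exp (α * Complex.I) * z := by
      rw [hrot, rotation_apply, Circle.coe_exp]
    simp only [ridgePoly, h0, h1, hr]
    rw [← hh, ← hα, ← hβ]
    rw [rot_coord α α z, rot_coord α β z]
    rw [sub_self, Real.cos_zero, Real.sin_zero, ← hδdef]
    have hπ : Real.sqrt π * Real.sqrt π = π := Real.mul_self_sqrt Real.pi_pos.le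
    rw [mul_mul_mul_comm, div_mul_div_comm, one_mul, hπ]
    ring_nf
  simp only [hpt]
  -- transfer to ℝ × ℝ
  have hmp := Complex.volume_preserving_equiv_real_prod.symm
  have step3 := hmp.setIntegral_preimage_emb
    (Complex.measurableEquivRealProd.symm.measurableEmbedding)
    (fun z : ℂ => (1/π) * ((U ℝ (n:ℤ)).eval z.re
        * (U ℝ (n:ℤ)).eval (z.re * Real.cos δ + z.im * Real.sin δ))) (Metric.ball 0 1)
  rw [← step3]
  have hpre : ⇑Complex.measurableEquivRealProd.symm ⁻¹' (Metric.ball (0:ℂ) 1)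
      = {q : ℝ × ℝ | q.1 ^ 2 + q.2 ^ 2 < 1} := by
    ext q
    simp only [Set.mem_preimage, Metric.mem_ball, dist_zero_right,
      Complex.measurableEquivRealProd_symm_apply, Set.mem_setOf_eq]
    rw [Complex.norm_def, Complex.normSq_mk,
      Real.sqrt_lt' one_pos]
    constructor <;> intro hq <;> nlinarith
  rw [hpre]
  have hre : ∀ q : ℝ × ℝ, (Complex.measurableEquivRealProd.symm q).re = q.1 := fun q => rfl
  have him : ∀ q : ℝ × ℝ, (Complex.measurableEquivRealProd.symm q).im = q.2 := fun q => rfl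
  simp only [hre, him]
  rw [MeasureTheory.integral_const_mul, disk_int n δ hδ]
  by_cases hjk : j = k
  · rw [if_pos hjk]
    have hδ0 : δ = 0 := by rw [hδdef, hα, hβ, hjk]; ring
    rw [hδ0, Real.cos_zero, _root_.U_eval_one]
    field_simp
  · rw [if_neg hjk]
    have hsδ : Real.sin δ ≠ 0 := hsδ' hjk
    have hU0 : (U ℝ (n:ℤ)).eval (Real.cos δ) = 0 := by
      have hU : (U ℝ (n:ℤ)).eval (Real.cos δ) * Real.sin δ = Real.sin (((n:ℝ)+1) * δ) := by
        exact_mod_cast U_real_cos δ (n:ℤ)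
      have hz : Real.sin (((n:ℝ)+1) * δ) = 0 := by
        have : ((n:ℝ)+1) * δ = ((k:ℤ) - (j:ℤ)) * π := by
          rw [hδdef, hα, hβ, hh]
          push_cast
          field_simp
        rw [this, show ((k:ℤ):ℝ) - ((j:ℤ):ℝ) = (((k - j : ℤ)):ℝ) by push_cast; ring,
          Real.sin_int_mul_pi]
      have := hU.trans hz
      exact (mul_eq_zero.mp this).resolve_right hsδ
    rw [hU0]
    simp

end aux
end

section
/- Each ridge polynomial φ̃_{n,k}(x,y) = (1/√π) U_n(x cos(kh) + y sin(kh)) with h = π/(n+1) is orthogonal in L²(D) to every polynomial of total degree at most n−1. -/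
open MeasureTheory Real

open MeasureTheory Real intervalIntegral Polynomial.Chebyshev

lemma trig_cos_pow (m : ℕ) : ∀ N : ℕ, m < N → ∫ θ in (0:ℝ)..π, Real.cos (N * θ) * Real.cos θ ^ m = 0 := by
  induction m with
  | zero =>
    intro N hN
    have hc : (N:ℝ) ≠ 0 := Nat.cast_ne_zero.2 (by omega)
    simp only [pow_zero, mul_one]
    rw [intervalIntegral.integral_comp_mul_left (fun x => Real.cos x) hc]
    simp [Real.sin_nat_mul_pi]
  | succ m ih =>
    intro N hN
    obtain ⟨M, rfl⟩ : ∃ M, N = M + 1 := ⟨N - 1, by omega⟩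
    have key : ∀ θ : ℝ, Real.cos (((M:ℝ)+1) * θ) * Real.cos θ ^ (m+1)
        = (1/2) * (Real.cos (((M:ℝ)+2) * θ) * Real.cos θ ^ m) + (1/2) * (Real.cos ((M:ℝ) * θ) * Real.cos θ ^ m) := by
      intro θ
      have h1 : ((M:ℝ)+2) * θ = ((M:ℝ)+1) * θ + θ := by ring
      have h2 : (M:ℝ) * θ = ((M:ℝ)+1) * θ - θ := by ring
      rw [h1, h2, Real.cos_add, Real.cos_sub]
      ring
    push_cast
    rw [intervalIntegral.integral_congr (g := fun θ => (1/2) * (Real.cos (((M:ℝ)+2) * θ) * Real.cos θ ^ m) + (1/2) * (Real.cos ((M:ℝ) * θ) * Real.cos θ ^ m)) (fun θ _ => key θ)]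
    rw [intervalIntegral.integral_add, intervalIntegral.integral_const_mul, intervalIntegral.integral_const_mul]
    · have h1 := ih (M+2) (by omega)
      have h2 := ih M (by omega)
      push_cast at h1 h2
      rw [h1, h2]; ring
    · exact (Continuous.intervalIntegrable (by continuity) _ _)
    · exact (Continuous.intervalIntegrable (by continuity) _ _)

lemma trig_sin_sin (n m : ℕ) (hm : m < n) :
    ∫ θ in (0:ℝ)..π, Real.sin (((n:ℝ)+1) * θ) * Real.sin θ * Real.cos θ ^ m = 0 := by
  have key : ∀ θ : ℝ, Real.sin (((n:ℝ)+1) * θ) * Real.sin θ * Real.cos θ ^ m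
      = (1/2) * (Real.cos ((n:ℝ) * θ) * Real.cos θ ^ m) - (1/2) * (Real.cos (((n:ℝ)+2) * θ) * Real.cos θ ^ m) := by
    intro θ
    have h1 : ((n:ℝ)+2) * θ = ((n:ℝ)+1) * θ + θ := by ring
    have h2 : (n:ℝ) * θ = ((n:ℝ)+1) * θ - θ := by ring
    rw [h1, h2, Real.cos_add, Real.cos_sub]
    ring
  rw [intervalIntegral.integral_congr (g := fun θ => (1/2) * (Real.cos ((n:ℝ) * θ) * Real.cos θ ^ m) - (1/2) * (Real.cos (((n:ℝ)+2) * θ) * Real.cos θ ^ m)) (fun θ _ => key θ)]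
  rw [intervalIntegral.integral_sub, intervalIntegral.integral_const_mul, intervalIntegral.integral_const_mul]
  · have h1 := trig_cos_pow m n hm
    have h2 := trig_cos_pow m (n+2) (by omega)
    push_cast at h1 h2
    rw [h1, h2]; ring
  · exact (Continuous.intervalIntegrable (by continuity) _ _)
  · exact (Continuous.intervalIntegrable (by continuity) _ _)

lemma cheb_orth (n m : ℕ) (hm : m < n) :
    ∫ x in (-1:ℝ)..1, (Polynomial.Chebyshev.U ℝ (n:ℤ)).eval x * x ^ m * Real.sqrt (1 - x^2) = 0 := by
  set g : ℝ → ℝ := fun x => (Polynomial.Chebyshev.U ℝ (n:ℤ)).eval x * x ^ m * Real.sqrt (1 - x^2) with hg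
  have hgc : Continuous g := by
    apply Continuous.mul
    · exact ((Polynomial.Chebyshev.U ℝ (n:ℤ)).continuous.mul (continuous_pow m))
    · exact (continuous_const.sub (continuous_pow 2)).sqrt
  have hsub := intervalIntegral.integral_comp_smul_deriv (f := Real.cos) (f' := fun θ => -Real.sin θ)
    (g := g) (a := 0) (b := π)
    (fun θ _ => Real.hasDerivAt_cos θ) (by fun_prop) hgc
  rw [Real.cos_zero, Real.cos_pi] at hsub
  have heq : ∫ θ in (0:ℝ)..π, (-Real.sin θ) • (g ∘ Real.cos) θ
      = ∫ θ in (0:ℝ)..π, -(Real.sin (((n:ℝ)+1) * θ) * Real.sin θ * Real.cos θ ^ m) := by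
    apply intervalIntegral.integral_congr
    intro θ hθ
    rw [Set.uIcc_of_le Real.pi_nonneg] at hθ
    have hs : Real.sin θ ≥ 0 := Real.sin_nonneg_of_nonneg_of_le_pi hθ.1 hθ.2
    have h1 : Real.sqrt (1 - Real.cos θ ^ 2) = Real.sin θ := by
      rw [← Real.sin_sq θ, Real.sqrt_sq hs]
    have hU := Polynomial.Chebyshev.U_real_cos θ (n:ℤ)
    push_cast at hU
    simp only [Function.comp, smul_eq_mul, hg, h1]
    rw [show (Polynomial.Chebyshev.U ℝ (n:ℤ)).eval (Real.cos θ) * Real.cos θ ^ m * Real.sin θ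
      = ((Polynomial.Chebyshev.U ℝ (n:ℤ)).eval (Real.cos θ) * Real.sin θ) * Real.cos θ ^ m by ring, hU]
    ring
  rw [heq, intervalIntegral.integral_neg, trig_sin_sin n m hm, neg_zero] at hsub
  have := hsub.symm
  rw [intervalIntegral.integral_symm] at this
  linarith [this]

lemma cheb_orth2 (n : ℕ) (j : ℕ) : ∀ a : ℕ, a + 2*j < n →
    ∫ x in (-1:ℝ)..1, (Polynomial.Chebyshev.U ℝ (n:ℤ)).eval x * (x ^ a * (1 - x^2)^j) * Real.sqrt (1 - x^2) = 0 := by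
  induction j with
  | zero => intro a ha; simpa using cheb_orth n a (by omega)
  | succ j ih =>
    intro a ha
    have key : ∀ x : ℝ, (Polynomial.Chebyshev.U ℝ (n:ℤ)).eval x * (x ^ a * (1 - x^2)^(j+1)) * Real.sqrt (1 - x^2)
        = (Polynomial.Chebyshev.U ℝ (n:ℤ)).eval x * (x ^ a * (1 - x^2)^j) * Real.sqrt (1 - x^2)
          - (Polynomial.Chebyshev.U ℝ (n:ℤ)).eval x * (x ^ (a+2) * (1 - x^2)^j) * Real.sqrt (1 - x^2) := by
      intro x; rw [pow_succ]; ring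
    rw [intervalIntegral.integral_congr (g := fun x => (Polynomial.Chebyshev.U ℝ (n:ℤ)).eval x * (x ^ a * (1 - x^2)^j) * Real.sqrt (1 - x^2)
          - (Polynomial.Chebyshev.U ℝ (n:ℤ)).eval x * (x ^ (a+2) * (1 - x^2)^j) * Real.sqrt (1 - x^2)) (fun x _ => key x)]
    rw [intervalIntegral.integral_sub, ih a (by omega), ih (a+2) (by omega), sub_zero]
    · exact Continuous.intervalIntegrable (by fun_prop) _ _
    · exact Continuous.intervalIntegrable (by fun_prop) _ _

lemma disk_monomial (n a b : ℕ) (hab : a + b < n) :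
    ∫ p in {p : ℝ × ℝ | p.1^2 + p.2^2 < 1}, (U ℝ (n:ℤ)).eval p.1 * (p.1^a * p.2^b) = 0 := by
  set S : Set (ℝ × ℝ) := {p : ℝ × ℝ | p.1^2 + p.2^2 < 1} with hS
  set F : ℝ × ℝ → ℝ := fun p => (U ℝ (n:ℤ)).eval p.1 * (p.1^a * p.2^b) with hF
  have hFc : Continuous F := by fun_prop
  have hSopen : IsOpen S := isOpen_lt (by fun_prop) continuous_const
  have hSsub : S ⊆ Set.Icc ((-1:ℝ),(-1:ℝ)) (1,1) := by
    rintro ⟨x,y⟩ h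
    simp only [hS, Set.mem_setOf_eq] at h
    constructor <;> constructor <;> simp <;> nlinarith [sq_nonneg x, sq_nonneg y, sq_nonneg (x-1), sq_nonneg (x+1), sq_nonneg (y-1), sq_nonneg (y+1)]
  have hInt : IntegrableOn F S := by
    apply (hFc.continuousOn.integrableOn_compact isCompact_Icc).mono_set hSsub
  rw [← MeasureTheory.integral_indicator hSopen.measurableSet]
  rw [MeasureTheory.Measure.volume_eq_prod]
  rw [MeasureTheory.integral_prod]
  swap
  · rw [MeasureTheory.integrable_indicator_iff hSopen.measurableSet]
    rw [← MeasureTheory.Measure.volume_eq_prod]; exact hInt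
  -- inner integral
  set s : ℝ → ℝ := fun x => Real.sqrt (1 - x^2) with hs
  set H : ℝ → ℝ := fun x => (U ℝ (n:ℤ)).eval x * x^a * (((s x)^(b+1) - (-(s x))^(b+1))/(b+1)) with hH
  have inner : ∀ x : ℝ, (∫ y : ℝ, S.indicator F (x, y)) = H x := by
    intro x
    by_cases hx : x^2 < 1
    · have hs0 : 0 < s x := Real.sqrt_pos.2 (by linarith)
      have hs2 : (s x)^2 = 1 - x^2 := Real.sq_sqrt (by linarith)
      have hslice : ∀ y : ℝ, S.indicator F (x, y) = (Set.Ioo (-(s x)) (s x)).indicator (fun y => (U ℝ (n:ℤ)).eval x * x^a * y^b) y := by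
        intro y
        have hmem : (x, y) ∈ S ↔ y ∈ Set.Ioo (-(s x)) (s x) := by
          simp only [hS, Set.mem_setOf_eq, Set.mem_Ioo]
          constructor
          · intro h
            have hy2 : y^2 < (s x)^2 := by rw [hs2]; linarith
            constructor <;> nlinarith
          · rintro ⟨h1,h2⟩
            have : y^2 < (s x)^2 := sq_lt_sq' h1 h2
            rw [hs2] at this; linarith
        by_cases hy : (x,y) ∈ S
        · rw [Set.indicator_of_mem hy, Set.indicator_of_mem (hmem.1 hy)]
          simp only [hF]; ring
        · rw [Set.indicator_of_notMem hy, Set.indicator_of_notMem (fun h => hy (hmem.2 h))]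
      simp_rw [hslice]
      rw [MeasureTheory.integral_indicator measurableSet_Ioo]
      rw [← MeasureTheory.integral_Ioc_eq_integral_Ioo,
        ← intervalIntegral.integral_of_le (by linarith : -(s x) ≤ s x)]
      rw [intervalIntegral.integral_const_mul, integral_pow]
    · have hempty : ∀ y : ℝ, S.indicator F (x,y) = 0 := by
        intro y
        apply Set.indicator_of_notMem
        simp only [hS, Set.mem_setOf_eq, not_lt]
        nlinarith [sq_nonneg y]
      have hs0 : s x = 0 := by
        apply Real.sqrt_eq_zero_of_nonpos; nlinarith
      simp_rw [hempty]
      simp [hH, hs0]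
  simp_rw [← hF, inner]
  -- outer integral
  have hH0 : ∀ x : ℝ, x ∉ Set.Icc (-1:ℝ) 1 → H x = 0 := by
    intro x hx
    have : 1 - x^2 ≤ 0 := by
      simp only [Set.mem_Icc, not_and_or, not_le] at hx
      rcases hx with h | h <;> nlinarith
    have : s x = 0 := Real.sqrt_eq_zero_of_nonpos (by linarith)
    simp [hH, this]
  rw [← MeasureTheory.setIntegral_eq_integral_of_forall_compl_eq_zero hH0]
  rw [MeasureTheory.integral_Icc_eq_integral_Ioc, ← intervalIntegral.integral_of_le (by norm_num : (-1:ℝ) ≤ 1)]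
  rcases Nat.even_or_odd b with hb | hb
  · -- b even
    obtain ⟨c, hc⟩ := hb
    have hbodd : Odd (b+1) := by exact ⟨c, by omega⟩
    have key : ∀ x ∈ Set.uIcc (-1:ℝ) 1, H x = (2/(b+1)) * ((U ℝ (n:ℤ)).eval x * (x^a * (1-x^2)^c) * Real.sqrt (1-x^2)) := by
      intro x hx
      rw [Set.uIcc_of_le (by norm_num)] at hx
      have h1 : (1:ℝ) - x^2 ≥ 0 := by
        rcases hx with ⟨h1,h2⟩; nlinarith
      have hsb : (s x)^b = (1-x^2)^c := by
        rw [show b = 2*c by omega, pow_mul, Real.sq_sqrt h1]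
      have hneg : (-(s x))^(b+1) = -((s x)^(b+1)) := hbodd.neg_pow _
      simp only [hH, hneg, sub_neg_eq_add]
      rw [show (s x)^(b+1) + (s x)^(b+1) = 2 * ((s x)^b * s x) by rw [pow_succ]; ring, hsb]
      field_simp
      ring
    rw [intervalIntegral.integral_congr key, intervalIntegral.integral_const_mul,
      cheb_orth2 n c a (by omega), mul_zero]
  · -- b odd
    have key : ∀ x ∈ Set.uIcc (-1:ℝ) 1, H x = 0 := by
      intro x _
      have : Even (b+1) := Odd.add_one hb
      simp [hH, this.neg_pow]
    rw [intervalIntegral.integral_congr key]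
    simp

lemma disk_poly (n : ℕ) (q : MvPolynomial (Fin 2) ℝ) (h : q.totalDegree < n) :
    ∫ p in {p : ℝ × ℝ | p.1^2 + p.2^2 < 1},
      (U ℝ (n:ℤ)).eval p.1 * MvPolynomial.eval (fun i => ![p.1, p.2] i) q = 0 := by
  set S : Set (ℝ × ℝ) := {p : ℝ × ℝ | p.1^2 + p.2^2 < 1} with hS
  have hSopen : IsOpen S := isOpen_lt (by fun_prop) continuous_const
  have hSsub : S ⊆ Set.Icc ((-1:ℝ),(-1:ℝ)) (1,1) := by
    rintro ⟨x,y⟩ hxy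
    simp only [hS, Set.mem_setOf_eq] at hxy
    constructor <;> constructor <;> simp <;> nlinarith [sq_nonneg x, sq_nonneg y]
  have key : ∀ p : ℝ × ℝ, (U ℝ (n:ℤ)).eval p.1 * MvPolynomial.eval (fun i => ![p.1, p.2] i) q
      = ∑ d ∈ q.support, (MvPolynomial.coeff d q) * ((U ℝ (n:ℤ)).eval p.1 * (p.1 ^ d 0 * p.2 ^ d 1)) := by
    intro p
    rw [MvPolynomial.eval_eq', Finset.mul_sum]
    apply Finset.sum_congr rfl
    intro d _
    rw [Fin.prod_univ_two]
    simp only [Matrix.cons_val_zero, Matrix.cons_val_one, Matrix.head_cons]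
    ring
  rw [MeasureTheory.setIntegral_congr_fun hSopen.measurableSet (fun p _ => key p)]
  rw [MeasureTheory.integral_finset_sum]
  · apply Finset.sum_eq_zero
    intro d hd
    rw [MeasureTheory.integral_const_mul]
    have hdeg : d 0 + d 1 < n := by
      have h1 : (Finset.univ : Finset (Fin 2)).sum d ≤ q.totalDegree := by
        have := MvPolynomial.le_totalDegree hd
        rwa [Finsupp.sum_fintype] at this
        intro; rfl
      rw [Fin.sum_univ_two] at h1
      omega
    rw [disk_monomial n (d 0) (d 1) hdeg, mul_zero]
  · intro d _
    apply Integrable.const_mul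
    have : IntegrableOn (fun p : ℝ × ℝ => (U ℝ (n:ℤ)).eval p.1 * (p.1 ^ d 0 * p.2 ^ d 1)) (Set.Icc ((-1:ℝ),(-1:ℝ)) (1,1)) :=
      (Continuous.continuousOn (by fun_prop)).integrableOn_compact isCompact_Icc
    exact this.mono_set hSsub

noncomputable def rotE (c s : ℝ) (h : c^2 + s^2 = 1) :
    EuclideanSpace ℝ (Fin 2) ≃ₗᵢ[ℝ] EuclideanSpace ℝ (Fin 2) where
  toLinearEquiv :=
  { toFun := fun p => WithLp.toLp 2 ![c * p 0 - s * p 1, s * p 0 + c * p 1]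
    invFun := fun p => WithLp.toLp 2 ![c * p 0 + s * p 1, -(s * p 0) + c * p 1]
    map_add' := by
      intro p r
      ext i
      fin_cases i <;>
        simp [PiLp.add_apply] <;> ring
    map_smul' := by
      intro m p
      ext i
      fin_cases i <;>
        simp [PiLp.smul_apply, smul_eq_mul] <;> ring
    left_inv := by
      intro p
      ext i
      fin_cases i <;> simp <;> first | linear_combination (p 0) * h | linear_combination (p 1) * h
    right_inv := by
      intro p
      ext i
      fin_cases i <;> simp <;> first | linear_combination (p 0) * h | linear_combination (p 1) * h }
  norm_map' := by
    intro p
    simp only [LinearEquiv.coe_mk]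
    rw [EuclideanSpace.norm_eq, EuclideanSpace.norm_eq]
    congr 1
    rw [Fin.sum_univ_two, Fin.sum_univ_two]
    simp only [Real.norm_eq_abs, sq_abs]
    show (c * p 0 - s * p 1)^2 + (s * p 0 + c * p 1)^2 = p 0 ^2 + p 1 ^2
    linear_combination (p 0 ^ 2 + p 1 ^ 2) * h

lemma rotE_apply0 (c s : ℝ) (h : c^2+s^2=1) (p : EuclideanSpace ℝ (Fin 2)) :
    (rotE c s h p) 0 = c * p 0 - s * p 1 := by simp [rotE]
lemma rotE_apply1 (c s : ℝ) (h : c^2+s^2=1) (p : EuclideanSpace ℝ (Fin 2)) :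
    (rotE c s h p) 1 = s * p 0 + c * p 1 := by simp [rotE]


lemma eval_bind₁' (f : Fin 2 → ℝ) (g : Fin 2 → MvPolynomial (Fin 2) ℝ) (φ : MvPolynomial (Fin 2) ℝ) :
    MvPolynomial.eval f (MvPolynomial.bind₁ g φ)
      = MvPolynomial.eval (fun i => MvPolynomial.eval f (g i)) φ := by
  have h := MvPolynomial.aeval_bind₁ f g φ
  exact h

lemma td_bind₁_le (g : Fin 2 → MvPolynomial (Fin 2) ℝ) (hg : ∀ i, (g i).totalDegree ≤ 1)
    (q : MvPolynomial (Fin 2) ℝ) : (MvPolynomial.bind₁ g q).totalDegree ≤ q.totalDegree := by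
  conv_lhs => rw [q.as_sum, map_sum]
  refine (MvPolynomial.totalDegree_finset_sum _ _).trans (Finset.sup_le fun d hd => ?_)
  rw [MvPolynomial.bind₁_monomial]
  calc (MvPolynomial.C (MvPolynomial.coeff d q) * ∏ i ∈ d.support, g i ^ d i).totalDegree
      ≤ (MvPolynomial.C (MvPolynomial.coeff d q)).totalDegree
          + (∏ i ∈ d.support, g i ^ d i).totalDegree :=
        MvPolynomial.totalDegree_mul _ _
    _ = (∏ i ∈ d.support, g i ^ d i).totalDegree := by rw [MvPolynomial.totalDegree_C, zero_add]
    _ ≤ ∑ i ∈ d.support, (g i ^ d i).totalDegree := MvPolynomial.totalDegree_finset_prod _ _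
    _ ≤ ∑ i ∈ d.support, d i := Finset.sum_le_sum fun i _ =>
        (MvPolynomial.totalDegree_pow _ _).trans (by
          have := hg i; calc d i * (g i).totalDegree ≤ d i * 1 := Nat.mul_le_mul_left _ this
            _ = d i := Nat.mul_one _)
    _ ≤ q.totalDegree := MvPolynomial.le_totalDegree hd



/-- Each ridge polynomial `φ̃_{n,k}` is orthogonal in `L²(D)` to every
polynomial of total degree at most `n − 1`. -/
theorem ridge_polynomial_orthogonal_lower_degree (n : ℕ) (k : ℕ) (hk : k ≤ n)
    (q : MvPolynomial (Fin 2) ℝ) (hq : q.totalDegree + 1 ≤ n) :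
    ∫ p in Metric.ball (0 : EuclideanSpace ℝ (Fin 2)) 1,
      ridgePoly n k p * MvPolynomial.eval (fun i => p i) q = 0 := by
  set α : ℝ := (k:ℝ) * (π / (n + 1)) with hα
  set c : ℝ := Real.cos α with hc
  set s : ℝ := Real.sin α with hsd
  have hcs : c ^ 2 + s ^ 2 = 1 := by
    rw [hc, hsd, ← Real.sin_sq_add_cos_sq α]; ring
  set e := rotE c s hcs with he
  have hmp : MeasurePreserving e := e.measurePreserving
  have hemb : MeasurableEmbedding e := e.toHomeomorph.measurableEmbedding
  have hball : ⇑e ⁻¹' (Metric.ball (0 : EuclideanSpace ℝ (Fin 2)) 1) = Metric.ball 0 1 := by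
    ext p
    simp [Metric.mem_ball, dist_zero_right, e.norm_map]
  have hrw := hmp.setIntegral_preimage_emb hemb
    (fun p => ridgePoly n k p * MvPolynomial.eval (fun i => p i) q) (Metric.ball 0 1)
  rw [hball] at hrw
  rw [← hrw]
  -- now integrand in terms of e p
  set g : Fin 2 → MvPolynomial (Fin 2) ℝ :=
    ![MvPolynomial.C c * MvPolynomial.X 0 - MvPolynomial.C s * MvPolynomial.X 1,
      MvPolynomial.C s * MvPolynomial.X 0 + MvPolynomial.C c * MvPolynomial.X 1] with hgdef
  set q' : MvPolynomial (Fin 2) ℝ := MvPolynomial.bind₁ g q with hq'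
  have hgt : ∀ i, (g i).totalDegree ≤ 1 := by
    intro i
    have hCX : ∀ (r : ℝ) (j : Fin 2),
        (MvPolynomial.C r * MvPolynomial.X j : MvPolynomial (Fin 2) ℝ).totalDegree ≤ 1 := by
      intro r j
      refine (MvPolynomial.totalDegree_mul _ _).trans ?_
      simp [MvPolynomial.totalDegree_C, MvPolynomial.totalDegree_X]
    fin_cases i
    · simp only [hgdef, Matrix.cons_val_zero]
      exact (MvPolynomial.totalDegree_sub _ _).trans (max_le (hCX c 0) (hCX s 1))
    · simp only [hgdef, Matrix.cons_val_one, Matrix.head_cons]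
      exact (MvPolynomial.totalDegree_add _ _).trans (max_le (hCX s 0) (hCX c 1))
  have hq't : q'.totalDegree < n := lt_of_le_of_lt (td_bind₁_le g hgt q) (by omega)
  have hintegrand : ∀ p : EuclideanSpace ℝ (Fin 2),
      ridgePoly n k (e p) * MvPolynomial.eval (fun i => (e p) i) q
      = (1 / Real.sqrt π) * ((Polynomial.Chebyshev.U ℝ (n:ℤ)).eval (p 0)
          * MvPolynomial.eval (fun i => p i) q') := by
    intro p
    have h0 : (e p) 0 * c + (e p) 1 * s = p 0 := by
      rw [he, rotE_apply0, rotE_apply1]; linear_combination (p 0) * hcs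
    have h1 : MvPolynomial.eval (fun i => (e p) i) q = MvPolynomial.eval (fun i => p i) q' := by
      rw [hq', eval_bind₁']
      have harg : (fun i => (e p) i) = fun i => MvPolynomial.eval (fun j => p j) (g i) := by
        funext i
        fin_cases i
        · simp [hgdef, he, rotE_apply0]
        · simp [hgdef, he, rotE_apply1]
      rw [harg]
    rw [h1, ridgePoly]
    rw [show (k:ℝ) * (π / (n + 1)) = α from rfl]
    rw [← hc, ← hsd, h0]
    ring
  simp_rw [hintegrand]
  rw [MeasureTheory.integral_const_mul]
  -- transfer to ℝ × ℝ
  have hφmp : MeasurePreserving ((MeasurableEquiv.toLp 2 (Fin 2 → ℝ)).symm.trans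
      (MeasurableEquiv.piFinTwo fun _ => ℝ)) :=
    (MeasureTheory.volume_preserving_piFinTwo fun _ => ℝ).comp
      (EuclideanSpace.volume_preserving_symm_measurableEquiv_toLp (Fin 2))
  set φ := (MeasurableEquiv.toLp 2 (Fin 2 → ℝ)).symm.trans (MeasurableEquiv.piFinTwo fun _ => ℝ) with hφ
  have hφemb : MeasurableEmbedding φ := φ.measurableEmbedding
  have hφball : ⇑φ ⁻¹' {z : ℝ × ℝ | z.1^2 + z.2^2 < 1} = Metric.ball 0 1 := by
    ext p
    have hnorm : ‖p‖ = Real.sqrt ((p 0)^2 + (p 1)^2) := by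
      rw [EuclideanSpace.norm_eq, Fin.sum_univ_two]
      simp [Real.norm_eq_abs, sq_abs]
    have hφp : φ p = (p 0, p 1) := rfl
    simp only [Set.mem_preimage, Set.mem_setOf_eq, hφp, Metric.mem_ball, dist_zero_right, hnorm]
    rw [Real.sqrt_lt' one_pos]
    norm_num
  have hrw2 := hφmp.setIntegral_preimage_emb hφemb
    (fun z : ℝ × ℝ => (Polynomial.Chebyshev.U ℝ (n:ℤ)).eval z.1
      * MvPolynomial.eval (fun i => ![z.1, z.2] i) q') {z : ℝ × ℝ | z.1^2 + z.2^2 < 1}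
  rw [hφball] at hrw2
  have hfun : ∀ p : EuclideanSpace ℝ (Fin 2),
      (Polynomial.Chebyshev.U ℝ (n:ℤ)).eval (p 0) * MvPolynomial.eval (fun i => p i) q'
      = (Polynomial.Chebyshev.U ℝ (n:ℤ)).eval ((φ p).1)
        * MvPolynomial.eval (fun i => ![(φ p).1, (φ p).2] i) q' := by
    intro p
    have : (fun i => p i) = (fun i => ![(φ p).1, (φ p).2] i) := by
      funext i; fin_cases i <;> rfl
    rw [← this]; rfl
  simp_rw [hfun]
  rw [hrw2, disk_poly n q' hq't, mul_zero]
end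

section
/- The quadrature rule ∫_D g(x,y) dx dy ≈ Σ_{l=0}^{q} Σ_{m=0}^{2q} g(r_l cos(2πm/(2q+1)), r_l sin(2πm/(2q+1))) ω_l r_l · 2π/(2q+1), combining the (q+1)-point Gauss–Legendre rule on [0,1] (nodes r_l, weights ω_l satisfying ∫₀¹ p = Σ_l ω_l p(r_l) for deg p ≤ 2q+1) in the radial variable with the (2q+1)-point trapezoidal rule in the angle, is exact for all polynomials g of total degree at most 2q on the unit disk D. -/
open MeasureTheory Real

section Aux
open Set Finset
lemma integral_ball_transfer (F : ℝ → ℝ → ℝ) (hF : Continuous fun z : ℝ × ℝ => F z.1 z.2) :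
    ∫ p in Metric.ball (0 : EuclideanSpace ℝ (Fin 2)) 1, F (p 0) (p 1)
      = ∫ z in Set.Ioo (0:ℝ) 1 ×ˢ Set.Ioo (-π) π,
          z.1 * F (z.1 * Real.cos z.2) (z.1 * Real.sin z.2) := by
  have ψmp : MeasurePreserving
      ((MeasurableEquiv.finTwoArrow.symm.trans
        (MeasurableEquiv.toLp 2 (Fin 2 → ℝ)) : ℝ × ℝ ≃ᵐ EuclideanSpace ℝ (Fin 2))) :=
    ((EuclideanSpace.volume_preserving_symm_measurableEquiv_toLp (Fin 2)).symm).comp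
      (volume_preserving_finTwoArrow ℝ).symm
  set ψ := (MeasurableEquiv.finTwoArrow.symm.trans
        (MeasurableEquiv.toLp 2 (Fin 2 → ℝ)) : ℝ × ℝ ≃ᵐ EuclideanSpace ℝ (Fin 2))
  have hpre : ψ ⁻¹' (Metric.ball (0 : EuclideanSpace ℝ (Fin 2)) 1)
      = {z : ℝ × ℝ | z.1 ^ 2 + z.2 ^ 2 < 1} := by
    ext z
    simp only [Set.mem_preimage, Metric.mem_ball, dist_zero_right, Set.mem_setOf_eq]
    rw [EuclideanSpace.norm_eq, Real.sqrt_lt' (by norm_num : (0:ℝ) < 1)]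
    have h0 : (ψ z : EuclideanSpace ℝ (Fin 2)) 0 = z.1 := rfl
    have h1 : (ψ z : EuclideanSpace ℝ (Fin 2)) 1 = z.2 := rfl
    rw [Fin.sum_univ_two, h0, h1]
    simp [sq_abs]
  have step1 : ∫ p in Metric.ball (0 : EuclideanSpace ℝ (Fin 2)) 1, F (p 0) (p 1)
      = ∫ z in {z : ℝ × ℝ | z.1 ^ 2 + z.2 ^ 2 < 1}, F z.1 z.2 := by
    rw [← hpre]
    exact (ψmp.setIntegral_preimage_emb ψ.measurableEmbedding (fun p => F (p 0) (p 1)) _).symm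
  rw [step1]
  -- indicator form
  have hmeas : MeasurableSet {z : ℝ × ℝ | z.1 ^ 2 + z.2 ^ 2 < 1} := by
    apply measurableSet_lt <;> fun_prop
  rw [← integral_indicator hmeas]
  rw [← integral_comp_polarCoord_symm
    (fun z : ℝ × ℝ => ({z : ℝ × ℝ | z.1 ^ 2 + z.2 ^ 2 < 1}).indicator (fun z => F z.1 z.2) z)]
  have hT : MeasurableSet (Set.Ioo (0:ℝ) 1 ×ˢ Set.Ioo (-π) π) :=
    (measurableSet_Ioo.prod measurableSet_Ioo)
  have heq : Set.EqOn
      (fun p : ℝ × ℝ => p.1 • ({z : ℝ × ℝ | z.1 ^ 2 + z.2 ^ 2 < 1}).indicator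
        (fun z => F z.1 z.2) (polarCoord.symm p))
      ((Set.Ioo (0:ℝ) 1 ×ˢ Set.Ioo (-π) π).indicator
        (fun p : ℝ × ℝ => p.1 * F (p.1 * Real.cos p.2) (p.1 * Real.sin p.2)))
      polarCoord.target := by
    intro p hp
    rw [polarCoord_target] at hp
    obtain ⟨hp1, hp2⟩ := hp
    simp only [polarCoord_symm_apply, Set.indicator_apply, Set.mem_setOf_eq, Set.mem_prod,
      Set.mem_Ioo]
    have hmem : (p.1 * Real.cos p.2) ^ 2 + (p.1 * Real.sin p.2) ^ 2 = p.1 ^ 2 := by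
      have := Real.sin_sq_add_cos_sq p.2
      ring_nf
      nlinarith [Real.sin_sq_add_cos_sq p.2]
    by_cases h : p.1 < 1
    · have : p.1 ^ 2 < 1 := by nlinarith [Set.mem_Ioi.mp hp1]
      rw [if_pos (by rw [hmem]; exact this), if_pos ⟨⟨Set.mem_Ioi.mp hp1, h⟩, hp2⟩]
      simp [smul_eq_mul]
    · have : ¬ p.1 ^ 2 < 1 := by push_neg at h ⊢; nlinarith
      rw [if_neg (by rw [hmem]; exact this), if_neg (by rintro ⟨⟨_, h'⟩, _⟩; exact h h')]
      simp
  rw [setIntegral_congr_fun polarCoord.open_target.measurableSet heq,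
    setIntegral_indicator hT]
  rw [Set.inter_eq_right.mpr]
  rw [polarCoord_target]
  exact Set.prod_mono Set.Ioo_subset_Ioi_self le_rfl

lemma geom_zero (N : ℕ) (n : ℤ) (h1 : n ≠ 0) (h2 : n.natAbs < N) :
    ∑ m : Fin N, Complex.exp (n * (2 * π * m / N) * Complex.I) = 0 := by
  have hN : (0:ℕ) < N := lt_of_le_of_lt (Nat.zero_le _) h2
  have hNC : (N:ℂ) ≠ 0 := Nat.cast_ne_zero.mpr hN.ne'
  have h2pi : (2 * (π:ℂ)) * Complex.I ≠ 0 := by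
    simp [Real.pi_ne_zero, Complex.I_ne_zero, Complex.ofReal_ne_zero]
  set z : ℂ := Complex.exp (n * (2 * π / N) * Complex.I) with hz
  have hterm : ∀ m : ℕ, Complex.exp (n * (2 * π * m / N) * Complex.I) = z ^ m := by
    intro m
    rw [hz, ← Complex.exp_nat_mul]
    congr 1
    field_simp
  have hzN : z ^ N = 1 := by
    rw [← Complex.exp_nat_mul]
    rw [show (N:ℂ) * (n * (2 * π / N) * Complex.I) = n * (2 * π * Complex.I) by
      field_simp]
    exact Complex.exp_int_mul_two_pi_mul_I n
  have hz1 : z ≠ 1 := by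
    intro h
    rw [Complex.exp_eq_one_iff] at h
    obtain ⟨k, hk⟩ := h
    have e1 : (n:ℂ) * (2 * π * Complex.I) = (k * N) * (2 * π * Complex.I) := by
      calc (n:ℂ) * (2 * π * Complex.I) = (n * (2 * π / N) * Complex.I) * N := by
            field_simp
        _ = (k * (2 * π * Complex.I)) * N := by rw [hk]
        _ = (k * N) * (2 * π * Complex.I) := by ring
    have e2 : (n:ℂ) = k * N := mul_right_cancel₀ h2pi e1
    have e3 : n = k * N := by exact_mod_cast e2
    have hk0 : k ≠ 0 := by rintro rfl; simp at e3; exact h1 e3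
    have : N ≤ n.natAbs := by
      rw [e3, Int.natAbs_mul, Int.natAbs_natCast]
      exact Nat.le_mul_of_pos_left N (Nat.pos_of_ne_zero (Int.natAbs_ne_zero.mpr hk0))
    omega
  have hsum : ∑ m : Fin N, Complex.exp (n * (2 * π * m / N) * Complex.I)
      = ∑ m ∈ Finset.range N, z ^ m := by
    rw [← Fin.sum_univ_eq_sum_range (fun m => z ^ m)]
    exact Finset.sum_congr rfl fun m _ => hterm m
  rw [hsum, geom_sum_eq hz1, hzN]
  simp

lemma int_exp (n : ℤ) (hn : n ≠ 0) :
    ∫ θ in (-π:ℝ)..π, Complex.exp (n * θ * Complex.I) = 0 := by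
  have hc : (n:ℂ) * Complex.I ≠ 0 := by
    simp [Complex.I_ne_zero, Int.cast_ne_zero, hn]
  have : ∀ θ : ℝ, (n:ℂ) * θ * Complex.I = (n * Complex.I) * θ := fun θ => by ring
  simp_rw [this]
  rw [integral_exp_mul_complex hc]
  have : Complex.exp ((n * Complex.I) * (π:ℝ)) = Complex.exp ((n * Complex.I) * (-π:ℝ)) := by
    rw [show ((n:ℂ) * Complex.I) * (π:ℝ) = (n * Complex.I) * (-π:ℝ) + n * (2 * π * Complex.I) by
      push_cast; ring, Complex.exp_add, Complex.exp_int_mul_two_pi_mul_I]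
    ring
  rw [this]
  simp

lemma expand (a b : ℕ) : ∃ c : ℕ → ℕ → ℂ, ∀ z : ℂ,
    Complex.cos z ^ a * Complex.sin z ^ b
      = ∑ j ∈ Finset.range (a+1), ∑ k ∈ Finset.range (b+1),
          c j k * Complex.exp (((2*(j+k) : ℤ) - (a+b)) * z * Complex.I) := by
  refine ⟨fun j k => (a.choose j : ℂ) * (b.choose k) * (-1:ℂ)^(k+b) * (-1:ℂ)^b
    * Complex.I^b / 2^(a+b), fun z => ?_⟩
  set x := Complex.exp (z * Complex.I) with hxdef
  set y := Complex.exp (-z * Complex.I) with hydef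
  have hxy : ∀ u v : ℕ, x ^ u * y ^ v
      = Complex.exp (((u:ℤ) - (v:ℤ)) * z * Complex.I) := by
    intro u v
    rw [hxdef, hydef, ← Complex.exp_nat_mul, ← Complex.exp_nat_mul, ← Complex.exp_add]
    congr 1; push_cast; ring
  have hcos : Complex.cos z = (x + y) / 2 := rfl
  have hsin : Complex.sin z = -((x - y) * Complex.I) / 2 := by
    rw [show Complex.sin z = (y - x) * Complex.I / 2 from rfl]; ring
  calc Complex.cos z ^ a * Complex.sin z ^ b
      = (∑ j ∈ Finset.range (a+1), x^j * y^(a-j) * (a.choose j : ℂ))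
        * (∑ k ∈ Finset.range (b+1), (-1:ℂ)^(k+b) * x^k * y^(b-k) * (b.choose k))
        * ((-1:ℂ)^b * Complex.I^b / 2^(a+b)) := by
          rw [hcos, hsin, div_pow, neg_div, neg_pow, div_pow, mul_pow, add_pow, sub_pow]
          ring
    _ = ∑ j ∈ Finset.range (a+1), ∑ k ∈ Finset.range (b+1),
          (x^j * y^(a-j) * (a.choose j : ℂ))
            * ((-1:ℂ)^(k+b) * x^k * y^(b-k) * (b.choose k))
            * ((-1:ℂ)^b * Complex.I^b / 2^(a+b)) := by
          rw [Finset.sum_mul_sum, Finset.sum_mul]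
          exact Finset.sum_congr rfl fun j _ => by rw [Finset.sum_mul]
    _ = _ := by
          refine Finset.sum_congr rfl fun j hj => Finset.sum_congr rfl fun k hk => ?_
          simp only [Finset.mem_range, Nat.lt_succ_iff] at hj hk
          have he : x ^ (j+k) * y ^ (a - j + (b - k))
              = Complex.exp (((2*(j+k) : ℤ) - (a+b)) * z * Complex.I) := by
            rw [hxy]
            congr 2
            push_cast [Nat.cast_sub hj, Nat.cast_sub hk]
            ring
          rw [← he, pow_add, pow_add]
          ring

lemma key3 (q : ℕ) (n : ℤ) (hn : n.natAbs ≤ 2*q) :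
    ∫ θ in (-π:ℝ)..π, Complex.exp (n * θ * Complex.I)
      = (2*(π:ℂ)/(2*(q:ℂ)+1))
        * ∑ m : Fin (2*q+1), Complex.exp (n * (2 * (π:ℂ) * m / (2*(q:ℂ)+1)) * Complex.I) := by
  have hq : ((2*q+1 : ℕ) : ℂ) = 2*(q:ℂ)+1 := by push_cast; ring
  by_cases hn0 : n = 0
  · subst hn0
    simp only [Int.cast_zero, zero_mul, Complex.exp_zero]
    rw [intervalIntegral.integral_const]
    rw [Finset.sum_const, Finset.card_univ, Fintype.card_fin]
    have hne : (2*(q:ℂ)+1) ≠ 0 := by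
      rw [← hq]; exact Nat.cast_ne_zero.mpr (Nat.succ_ne_zero _)
    field_simp
    simp only [Complex.real_smul]
    push_cast
    ring
  · rw [int_exp n hn0]
    have := geom_zero (2*q+1) n hn0 (by omega)
    rw [show (∑ m : Fin (2*q+1), Complex.exp (n * (2 * (π:ℂ) * m / (2*(q:ℂ)+1)) * Complex.I))
        = ∑ m : Fin (2*q+1), Complex.exp (↑n * (2 * ↑π * ↑↑m / ↑(2*q+1)) * Complex.I) by
      exact Finset.sum_congr rfl fun m _ => by rw [hq]]
    rw [this, mul_zero]

lemma angular (q a b : ℕ) (hab : a + b ≤ 2*q) :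
    (∫ θ in (-π:ℝ)..π, Real.cos θ ^ a * Real.sin θ ^ b)
      = 2*π/(2*(q:ℝ)+1) * ∑ m : Fin (2*q+1),
          Real.cos (2*π*m/(2*(q:ℝ)+1)) ^ a * Real.sin (2*π*m/(2*(q:ℝ)+1)) ^ b := by
  apply Complex.ofReal_injective
  push_cast [← intervalIntegral.integral_ofReal]
  obtain ⟨c, hc⟩ := expand a b
  simp_rw [hc]
  have hcontE : ∀ (j k : ℕ), Continuous
      (fun θ : ℝ => c j k * Complex.exp ((↑(2 * ((j:ℤ) + k)) - ((a:ℂ) + b)) * θ * Complex.I)) := by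
    intro j k
    exact continuous_const.mul (Complex.continuous_exp.comp (by continuity))
  have hkey : ∀ (j k : ℕ), j ≤ a → k ≤ b →
      (∫ θ in (-π:ℝ)..π, Complex.exp ((↑(2 * ((j:ℤ) + k)) - ((a:ℂ) + b)) * θ * Complex.I))
        = (2*(π:ℂ)/(2*(q:ℂ)+1)) * ∑ m : Fin (2*q+1),
            Complex.exp ((↑(2 * ((j:ℤ) + k)) - ((a:ℂ) + b))
              * (2 * (π:ℂ) * m / (2*(q:ℂ)+1)) * Complex.I) := by
    intro j k hj hk
    have hcast : ((2*((j:ℤ)+k) - (a+b) : ℤ) : ℂ) = (↑(2 * ((j:ℤ) + k)) - ((a:ℂ) + b)) := by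
      push_cast; ring
    simp_rw [← hcast]
    exact key3 q (2*((j:ℤ)+k) - (a+b)) (by omega)
  rw [intervalIntegral.integral_finset_sum (fun j _ =>
    Continuous.intervalIntegrable (continuous_finset_sum _ fun k _ => hcontE j k) _ _)]
  rw [Finset.sum_congr rfl (fun j hj => intervalIntegral.integral_finset_sum
    (fun k _ => (hcontE j k).intervalIntegrable _ _))]
  rw [Finset.sum_congr rfl (fun j hj => Finset.sum_congr rfl (fun k hk => by
    rw [intervalIntegral.integral_const_mul, hkey j k
      (Nat.lt_succ_iff.mp (Finset.mem_range.mp hj)) (Nat.lt_succ_iff.mp (Finset.mem_range.mp hk))]))]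
  simp_rw [Finset.mul_sum]
  rw [Finset.sum_congr rfl (fun j _ => Finset.sum_comm), Finset.sum_comm]
  exact Finset.sum_congr rfl fun m _ => Finset.sum_congr rfl fun j _ =>
    Finset.sum_congr rfl fun k _ => by ring

end Aux

/-- The quadrature rule on the unit disk obtained by combining the
`(q+1)`-point Gauss–Legendre rule on `[0,1]` (radially, with weight `r`) and the
`(2q+1)`-point trapezoidal rule in the angle is exact for all polynomials of total
degree at most `2q`. -/
theorem disk_quadrature_exactness (q : ℕ) (r ω : Fin (q + 1) → ℝ)
    (hGL : ∀ p : Polynomial ℝ, p.natDegree ≤ 2 * q + 1 →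
      ∫ x in (0:ℝ)..1, p.eval x = ∑ l, ω l * p.eval (r l))
    (g : MvPolynomial (Fin 2) ℝ) (hg : g.totalDegree ≤ 2 * q) :
    ∫ p in Metric.ball (0 : EuclideanSpace ℝ (Fin 2)) 1,
        MvPolynomial.eval (fun i => p i) g =
      ∑ l : Fin (q + 1), ∑ m : Fin (2 * q + 1),
        MvPolynomial.eval
          ![r l * Real.cos (2 * π * m / (2 * q + 1)),
            r l * Real.sin (2 * π * m / (2 * q + 1))] g *
          ω l * (2 * π / (2 * q + 1)) * r l := by
  have hπ : -π ≤ π := by linarith [Real.pi_pos]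
  have hgeval : ∀ x y : ℝ, MvPolynomial.eval ![x,y] g
      = ∑ d ∈ g.support, g.coeff d * (x ^ d 0 * y ^ d 1) := by
    intro x y
    rw [MvPolynomial.eval_eq']
    refine Finset.sum_congr rfl fun d _ => ?_
    rw [Fin.prod_univ_two]
    simp
  have hdeg : ∀ d ∈ g.support, d 0 + d 1 ≤ 2*q := by
    intro d hd
    have h1 := MvPolynomial.le_totalDegree hd
    have h2 : (d.sum fun _ e => e) = d 0 + d 1 := by
      rw [Finsupp.sum_fintype _ _ (fun i => rfl), Fin.sum_univ_two]
    omega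
  have hFcont : Continuous fun z : ℝ × ℝ => MvPolynomial.eval ![z.1, z.2] g := by
    apply (MvPolynomial.continuous_eval (p := g)).comp
    refine continuous_pi fun i => ?_
    fin_cases i
    · simpa using continuous_fst
    · simpa using continuous_snd
  have step1 : (∫ p in Metric.ball (0 : EuclideanSpace ℝ (Fin 2)) 1,
      MvPolynomial.eval (fun i => p i) g)
      = ∫ z in Set.Ioo (0:ℝ) 1 ×ˢ Set.Ioo (-π) π,
          z.1 * MvPolynomial.eval ![z.1 * Real.cos z.2, z.1 * Real.sin z.2] g := by
    have h0 : ∀ p : EuclideanSpace ℝ (Fin 2),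
        MvPolynomial.eval (fun i => p i) g = MvPolynomial.eval ![p 0, p 1] g := by
      intro p
      have hv : (fun i => p i) = ![p 0, p 1] := by funext i; fin_cases i <;> rfl
      exact congrArg (fun v : Fin 2 → ℝ => MvPolynomial.eval v g) hv
    rw [MeasureTheory.setIntegral_congr_fun Metric.isOpen_ball.measurableSet
      (fun p _ => h0 p)]
    exact integral_ball_transfer (fun x y => MvPolynomial.eval ![x,y] g) hFcont
  have hint : ∀ d : Fin 2 →₀ ℕ, MeasureTheory.IntegrableOn
      (fun z : ℝ×ℝ => z.1 * (g.coeff d * ((z.1 * Real.cos z.2) ^ d 0 * (z.1 * Real.sin z.2) ^ d 1)))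
      (Set.Ioo (0:ℝ) 1 ×ˢ Set.Ioo (-π) π) := by
    intro d
    have hc : Continuous (fun z : ℝ×ℝ =>
        z.1 * (g.coeff d * ((z.1 * Real.cos z.2) ^ d 0 * (z.1 * Real.sin z.2) ^ d 1))) := by
      fun_prop
    exact (hc.continuousOn.integrableOn_compact (isCompact_Icc.prod isCompact_Icc)).mono_set
      (Set.prod_mono Set.Ioo_subset_Icc_self Set.Ioo_subset_Icc_self)
  rw [step1]
  have step2 : (∫ z in Set.Ioo (0:ℝ) 1 ×ˢ Set.Ioo (-π) π,
        z.1 * MvPolynomial.eval ![z.1 * Real.cos z.2, z.1 * Real.sin z.2] g)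
      = ∑ d ∈ g.support, ∫ z in Set.Ioo (0:ℝ) 1 ×ˢ Set.Ioo (-π) π,
          z.1 * (g.coeff d * ((z.1 * Real.cos z.2) ^ d 0 * (z.1 * Real.sin z.2) ^ d 1)) := by
    simp_rw [hgeval, Finset.mul_sum]
    exact MeasureTheory.integral_finset_sum _ (fun d _ => hint d)
  rw [step2]
  have hterm : ∀ d ∈ g.support,
      (∫ z in Set.Ioo (0:ℝ) 1 ×ˢ Set.Ioo (-π) π,
        z.1 * (g.coeff d * ((z.1 * Real.cos z.2) ^ d 0 * (z.1 * Real.sin z.2) ^ d 1)))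
      = g.coeff d * ((∑ l, ω l * r l ^ (d 0 + d 1 + 1)) *
          (2*π/(2*(q:ℝ)+1) * ∑ m : Fin (2*q+1),
            Real.cos (2*π*m/(2*(q:ℝ)+1)) ^ d 0 * Real.sin (2*π*m/(2*(q:ℝ)+1)) ^ d 1)) := by
    intro d hd
    have heq : Set.EqOn
        (fun z : ℝ×ℝ => z.1 * (g.coeff d * ((z.1 * Real.cos z.2) ^ d 0 * (z.1 * Real.sin z.2) ^ d 1)))
        (fun z : ℝ×ℝ => (g.coeff d * z.1 ^ (d 0 + d 1 + 1)) * (Real.cos z.2 ^ d 0 * Real.sin z.2 ^ d 1))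
        (Set.Ioo (0:ℝ) 1 ×ˢ Set.Ioo (-π) π) := by
      intro z _
      simp only
      ring
    rw [MeasureTheory.setIntegral_congr_fun (measurableSet_Ioo.prod measurableSet_Ioo) heq]
    rw [MeasureTheory.Measure.volume_eq_prod, MeasureTheory.setIntegral_prod_mul
      (fun t : ℝ => MvPolynomial.coeff d g * t ^ (d 0 + d 1 + 1))
      (fun t : ℝ => Real.cos t ^ d 0 * Real.sin t ^ d 1)
      (Set.Ioo (0:ℝ) 1) (Set.Ioo (-π) π)]
    have hrad : (∫ x in Set.Ioo (0:ℝ) 1, g.coeff d * x ^ (d 0 + d 1 + 1))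
        = g.coeff d * ∑ l, ω l * r l ^ (d 0 + d 1 + 1) := by
      rw [← MeasureTheory.integral_Ioc_eq_integral_Ioo,
        ← intervalIntegral.integral_of_le (by norm_num : (0:ℝ) ≤ 1),
        intervalIntegral.integral_const_mul]
      have h := hGL (Polynomial.X ^ (d 0 + d 1 + 1)) (by
        rw [Polynomial.natDegree_X_pow]
        have := hdeg d hd; omega)
      simp only [Polynomial.eval_pow, Polynomial.eval_X] at h
      rw [h]
    rw [hrad]
    have hang : (∫ y in Set.Ioo (-π) π, Real.cos y ^ d 0 * Real.sin y ^ d 1)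
        = 2*π/(2*(q:ℝ)+1) * ∑ m : Fin (2*q+1),
            Real.cos (2*π*m/(2*(q:ℝ)+1)) ^ d 0 * Real.sin (2*π*m/(2*(q:ℝ)+1)) ^ d 1 := by
      rw [← MeasureTheory.integral_Ioc_eq_integral_Ioo, ← intervalIntegral.integral_of_le hπ]
      exact angular q (d 0) (d 1) (hdeg d hd)
    rw [hang]
    ring
  rw [Finset.sum_congr rfl hterm]
  simp_rw [hgeval, Finset.sum_mul]
  rw [Finset.sum_congr rfl (fun l _ => Finset.sum_comm), Finset.sum_comm]
  refine Finset.sum_congr rfl fun d hd => ?_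
  simp only [Finset.mul_sum]
  refine Finset.sum_congr rfl fun l _ => Finset.sum_congr rfl fun m _ => ?_
  ring
end
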